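/- If (a_n) is a weakly density lifting invariant (weakly dli) arithmetic sequence, then the statistically characterized subgroup t^s_{(d_n)}(T) has cardinality of the continuum. -/

import Mathlib

open Filter Topology Set

noncomputable section

def ratios (a : ℕ → ℕ) (n : ℕ) : ℕ := a n / a (n - 1)

def IsArithSeq (a : ℕ → ℕ) : Prop :=
  a 0 = 1 ∧ (∀ n, a n < a (n + 1)) ∧ (∀ n, a n ∣ a (n + 1))

def nseq (a : ℕ → ℕ) : ℕ → ℕ
  | 0 => 1
  | k + 1 => nseq a k + (ratios a (k + 1) - 1)


def liftSet (a : ℕ → ℕ) (A : Set ℕ) : Set ℕ :=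
  ⋃ k ∈ A, Set.Icc (nseq a (k - 1)) (nseq a k - 1)

def HasDensity (A : Set ℕ) (δ : ℝ) : Prop :=
  Tendsto (fun n : ℕ => ((A ∩ Set.Iio n).ncard : ℝ) / n) atTop (𝓝 δ)

def upperDensity (A : Set ℕ) : ℝ :=
  limsup (fun n : ℕ => ((A ∩ Set.Iio n).ncard : ℝ) / n) atTop

def dSeq (a : ℕ → ℕ) : ℕ → ℕ :=
  Nat.nth (fun m => ∃ k r : ℕ, 1 ≤ r ∧ r < ratios a (k + 1) ∧ m = r * a k)


def charSub (u : ℕ → ℤ) : Set (AddCircle (1 : ℝ)) :=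
  {x | Tendsto (fun n => u n • x) atTop (𝓝 0)}

def statChar (u : ℕ → ℤ) : Set (AddCircle (1 : ℝ)) :=
  {x | ∀ ε : ℝ, 0 < ε → HasDensity {n : ℕ | ε ≤ ‖u n • x‖} 0}

def Dli (a : ℕ → ℕ) : Prop :=
  ∀ A : Set ℕ, A.Infinite → HasDensity A 0 → HasDensity (liftSet a A) 0

def WeaklyDli (a : ℕ → ℕ) : Prop :=
  ∃ A : Set ℕ, A.Infinite ∧ ∀ m : ℕ, HasDensity (liftSet a ((fun x => x - m) '' A)) 0

def StronglyNonDli (a : ℕ → ℕ) : Prop :=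
  ∀ A : Set ℕ, A.Infinite → 0 < upperDensity (liftSet a A)

open scoped Classical

def dPred (a : ℕ → ℕ) (m : ℕ) : Prop :=
  ∃ k r : ℕ, 1 ≤ r ∧ r < ratios a (k + 1) ∧ m = r * a k

lemma dSeq_eq_nth (a : ℕ → ℕ) : dSeq a = Nat.nth (dPred a) := rfl

section basic

variable {a : ℕ → ℕ} (ha : IsArithSeq a)
include ha

lemma apos : ∀ n, 0 < a n := by
  intro n
  induction n with
  | zero => rw [ha.1]; norm_num
  | succ n ih => exact ih.trans (ha.2.1 n)

lemma ratios_mul (k : ℕ) : a (k + 1) = ratios a (k + 1) * a k := by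
  have : a k ∣ a (k + 1) := ha.2.2 k
  rw [ratios]; simp only [Nat.add_sub_cancel]
  exact (Nat.div_mul_cancel this).symm

lemma two_le_ratios (k : ℕ) : 2 ≤ ratios a (k + 1) := by
  by_contra hb
  have h1 : ratios a (k + 1) ≤ 1 := by omega
  have := ha.2.1 k
  rw [ratios_mul ha k] at this
  nlinarith [apos ha k]

lemma amono : ∀ {j k : ℕ}, j ≤ k → a j ∣ a k := by
  intro j k hjk
  induction k with
  | zero => rw [Nat.le_zero.mp hjk]
  | succ k ih =>
    rcases Nat.lt_or_ge j (k+1) with h | h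
    · exact (ih (by omega)).trans (ha.2.2 k)
    · rw [show j = k + 1 by omega]

lemma pow_mul_le (j : ℕ) : ∀ t, a j * 2 ^ t ≤ a (j + t) := by
  intro t
  induction t with
  | zero => simp
  | succ t ih =>
    have h1 : a (j + t) * 2 ≤ a (j + t + 1) := by
      rw [ratios_mul ha (j + t)]
      have := two_le_ratios ha (j + t)
      nlinarith [apos ha (j + t)]
    calc a j * 2 ^ (t + 1) = a j * 2 ^ t * 2 := by ring
    _ ≤ a (j + t) * 2 := by omega
    _ ≤ a (j + (t + 1)) := by rw [show j + (t+1) = j + t + 1 by omega]; exact h1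

lemma two_pow_le (n : ℕ) : 2 ^ n ≤ a n := by
  have := pow_mul_le ha 0 n
  simpa [ha.1] using this

omit ha

lemma nseq_pos (k : ℕ) : 1 ≤ nseq a k := by
  induction k with
  | zero => simp [nseq]
  | succ k ih => rw [nseq]; omega

lemma nseq_succ (k : ℕ) : nseq a (k + 1) = nseq a k + (ratios a (k + 1) - 1) := rfl

include ha

lemma nseq_lt_succ (k : ℕ) : nseq a k < nseq a (k + 1) := by
  rw [nseq_succ]
  have := two_le_ratios ha k
  omega

lemma nseq_strictMono : StrictMono (nseq a) :=
  strictMono_nat_of_lt_succ (nseq_lt_succ ha)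

lemma le_nseq (k : ℕ) : k + 1 ≤ nseq a k := by
  induction k with
  | zero => simp [nseq]
  | succ k ih => have := nseq_lt_succ ha k; omega

omit ha

lemma dPred_mul {k r : ℕ} (hr1 : 1 ≤ r) (hr2 : r < ratios a (k + 1)) :
    dPred a (r * a k) := ⟨k, r, hr1, hr2, rfl⟩

include ha

lemma not_dPred_between {k r x : ℕ} (hr1 : 1 ≤ r) (hr2 : r + 1 ≤ ratios a (k + 1))
    (hx1 : r * a k < x) (hx2 : x < (r + 1) * a k) : ¬ dPred a x := by
  rintro ⟨j, r', hr'1, hr'2, rfl⟩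
  rcases lt_trichotomy j k with h | h | h
  · have h1 : r' * a j < a (j + 1) := by
      rw [ratios_mul ha j]
      have := apos ha j
      exact (Nat.mul_lt_mul_right this).mpr hr'2
    have h2 : a (j + 1) ≤ a k := Nat.le_of_dvd (apos ha k) (amono ha (by omega))
    have h3 : a k ≤ r * a k := Nat.le_mul_of_pos_left _ hr1
    omega
  · rw [h] at hr'2 hx1 hx2
    have hk := apos ha k
    rcases Nat.lt_or_ge r' r with h2 | h2
    · nlinarith
    · rcases Nat.lt_or_ge r' (r + 1) with h' | h'
      · have : r' = r := by omega
        rw [this] at hx1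
        omega
      · nlinarith
  · have h1 : (r + 1) * a k ≤ a (k + 1) := by
      rw [ratios_mul ha k]
      exact Nat.mul_le_mul_right _ hr2
    have h2 : a (k + 1) ≤ a j := Nat.le_of_dvd (apos ha j) (amono ha (by omega))
    have h3 : a j ≤ r' * a j := Nat.le_mul_of_pos_left _ hr'1
    omega

omit ha

lemma count_add_of {P : ℕ → Prop} {m : ℕ} :
    ∀ t, 1 ≤ t → (∀ x, m < x → x < m + t → ¬ P x) → P m →
      Nat.count P (m + t) = Nat.count P m + 1 := by
  intro t
  induction t with
  | zero => omega
  | succ t ih =>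
    intro _ hgap hm
    rcases Nat.eq_zero_or_pos t with h | h
    · subst h
      rw [Nat.count_succ, if_pos hm]
    · have h1 : Nat.count P (m + t) = Nat.count P m + 1 :=
        ih h (fun x hx1 hx2 => hgap x hx1 (by omega)) hm
      rw [show m + (t + 1) = (m + t) + 1 by omega, Nat.count_succ,
        if_neg (hgap (m + t) (by omega) (by omega)), h1]

include ha

lemma count_block_step (k : ℕ) (hbase : Nat.count (dPred a) (a k) + 1 = nseq a k) :
    ∀ s, s + 1 ≤ ratios a (k + 1) →
      Nat.count (dPred a) ((s + 1) * a k) + 1 = nseq a k + s := by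
  intro s
  induction s with
  | zero => intro _; simpa using hbase
  | succ s ihs =>
    intro hs
    have step : Nat.count (dPred a) ((s + 2) * a k)
        = Nat.count (dPred a) ((s + 1) * a k) + 1 := by
      rw [show (s + 2) * a k = (s + 1) * a k + a k by ring]
      exact count_add_of (a k) (apos ha k)
        (fun x hx1 hx2 => not_dPred_between ha (r := s + 1) (by omega) (by omega) hx1
          (by rw [show (s + 1 + 1) * a k = (s + 1) * a k + a k by ring]; omega))
        (dPred_mul (by omega) (by omega))
    have := ihs (by omega)
    rw [show s + 1 + 1 = s + 2 by rfl, step]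
    omega

lemma count_a : ∀ k, Nat.count (dPred a) (a k) + 1 = nseq a k := by
  intro k
  induction k with
  | zero =>
    have hn0 : ¬ dPred a 0 := by
      rintro ⟨j, r', h1, h2, h⟩
      have := apos ha j
      nlinarith
    have h1 : Nat.count (dPred a) 1 = 0 := by
      rw [show Nat.count (dPred a) 1 = Nat.count (dPred a) 0 + if dPred a 0 then 1 else 0
        from Nat.count_succ (p := dPred a) 0, if_neg hn0, Nat.count_zero]
    rw [ha.1, h1]
    rfl
  | succ k ih =>
    have hb := two_le_ratios ha k
    have := count_block_step ha k ih (ratios a (k + 1) - 1) (by omega)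
    rw [show ratios a (k + 1) - 1 + 1 = ratios a (k + 1) by omega, ← ratios_mul ha k] at this
    rw [this, nseq_succ]

lemma count_block (k s : ℕ) (hs : s + 1 ≤ ratios a (k + 1)) :
    Nat.count (dPred a) ((s + 1) * a k) + 1 = nseq a k + s :=
  count_block_step ha k (count_a ha k) s hs

lemma dSeq_block {k s : ℕ} (hs : s + 2 ≤ ratios a (k + 1)) :
    dSeq a (nseq a k - 1 + s) = (s + 1) * a k := by
  have hcount := count_block ha k s (by omega)
  have hmem : dPred a ((s + 1) * a k) := dPred_mul (by omega) (by omega)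
  have hnth := Nat.nth_count hmem
  rw [dSeq_eq_nth]
  have hnp := nseq_pos (a := a) k
  rw [show nseq a k - 1 + s = Nat.count (dPred a) ((s + 1) * a k) by omega]
  exact hnth

lemma exists_scale (n : ℕ) : ∃ k s, s + 2 ≤ ratios a (k + 1) ∧ n = nseq a k - 1 + s ∧
    dSeq a n = (s + 1) * a k := by
  have key : ∀ n : ℕ, ∃ k, nseq a k - 1 ≤ n ∧ n + 1 < nseq a (k + 1) := by
    intro n
    induction n with
    | zero =>
      refine ⟨0, by simp [nseq], ?_⟩
      have h1 := nseq_lt_succ ha 0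
      have h2 : nseq a 0 = 1 := rfl
      omega
    | succ n ih =>
      obtain ⟨k, h1, h2⟩ := ih
      rcases Nat.lt_or_ge (n + 2) (nseq a (k + 1)) with h | h
      · exact ⟨k, by omega, h⟩
      · have heq : n + 2 = nseq a (k + 1) := by omega
        have h3 := nseq_lt_succ ha (k + 1)
        exact ⟨k + 1, by omega, by omega⟩
  obtain ⟨k, h1, h2⟩ := key n
  have hb := two_le_ratios ha k
  have hnp := nseq_pos (a := a) k
  have hsucc := nseq_succ (a := a) k
  have hgoal1 : n - (nseq a k - 1) + 2 ≤ ratios a (k + 1) := by omega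
  refine ⟨k, n - (nseq a k - 1), hgoal1, by omega, ?_⟩
  have hn' : nseq a k - 1 + (n - (nseq a k - 1)) = n := by omega
  have hd := dSeq_block ha hgoal1
  rwa [hn'] at hd

end basic
section density

lemma hasDensity_zero_subset {B C : Set ℕ} (hBC : B ⊆ C) (hC : HasDensity C 0) :
    HasDensity B 0 := by
  refine squeeze_zero (fun n => by positivity) (fun n => ?_) hC
  have hfin : (C ∩ Set.Iio n).Finite := (Set.finite_Iio n).inter_of_right C
  have hcard : (B ∩ Set.Iio n).ncard ≤ (C ∩ Set.Iio n).ncard :=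
    Set.ncard_le_ncard (Set.inter_subset_inter_left _ hBC) hfin
  gcongr

lemma hasDensity_zero_union {B C : Set ℕ} (hB : HasDensity B 0) (hC : HasDensity C 0) :
    HasDensity (B ∪ C) 0 := by
  have hadd : Tendsto (fun n : ℕ => ((B ∩ Set.Iio n).ncard : ℝ) / n
      + ((C ∩ Set.Iio n).ncard : ℝ) / n) atTop (𝓝 0) := by
    simpa using hB.add hC
  refine squeeze_zero (fun n => by positivity) (fun n => ?_) hadd
  have hcard : ((B ∪ C) ∩ Set.Iio n).ncard ≤ (B ∩ Set.Iio n).ncard + (C ∩ Set.Iio n).ncard := by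
    rw [Set.union_inter_distrib_right]
    exact Set.ncard_union_le _ _
  rw [← add_div]
  have h1 : (((B ∪ C) ∩ Set.Iio n).ncard : ℝ) ≤ ((B ∩ Set.Iio n).ncard : ℝ) + ((C ∩ Set.Iio n).ncard : ℝ) := by
    exact_mod_cast hcard
  rcases Nat.eq_zero_or_pos n with rfl | hn
  · simp
  · exact (div_le_div_iff_of_pos_right (by positivity)).mpr h1


lemma hasDensity_zero_singleton (x : ℕ) : HasDensity {x} 0 := by
  refine squeeze_zero (f := fun n : ℕ => (({x} ∩ Set.Iio n : Set ℕ).ncard : ℝ) / n)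
    (g := fun n : ℕ => 1 / (n : ℝ)) (fun n => by positivity) (fun n => ?_)
    tendsto_one_div_atTop_nhds_zero_nat
  have hcard : (({x} : Set ℕ) ∩ Set.Iio n).ncard ≤ 1 := by
    have := Set.ncard_le_ncard (Set.inter_subset_left (s := ({x} : Set ℕ)) (t := Set.Iio n))
      (Set.finite_singleton x)
    simpa using this
  have h1 : ((({x} : Set ℕ) ∩ Set.Iio n).ncard : ℝ) ≤ 1 := by exact_mod_cast hcard
  rcases Nat.eq_zero_or_pos n with rfl | hn
  · simp
  · exact (div_le_div_iff_of_pos_right (by positivity)).mpr h1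

lemma hasDensity_zero_biUnion (M : ℕ) (f : ℕ → Set ℕ) (hf : ∀ m, HasDensity (f m) 0) :
    HasDensity (⋃ m ∈ Finset.range M, f m) 0 := by
  induction M with
  | zero =>
    apply hasDensity_zero_subset (C := f 0) _ (hf 0)
    simp
  | succ M ih =>
    have : (⋃ m ∈ Finset.range (M + 1), f m) = (⋃ m ∈ Finset.range M, f m) ∪ f M := by
      rw [Finset.range_add_one]
      simp [Set.biUnion_insert, Set.union_comm]
    rw [this]
    exact hasDensity_zero_union ih (hf M)

end density
section construction

def cseq (A : Set ℕ) (j : ℕ) : ℕ := Nat.nth (· ∈ A) (2 * j + 2)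

def gfun (a : ℕ → ℕ) (A S : Set ℕ) (j : ℕ) : ℝ :=
  if j ∈ S then ((a (cseq A j) : ℝ))⁻¹ else 0

def xval (a : ℕ → ℕ) (A S : Set ℕ) : ℝ := ∑' j, gfun a A S j

variable {a : ℕ → ℕ} (ha : IsArithSeq a) {A : Set ℕ} (hA : A.Infinite)

set_option linter.unusedSectionVars false

include hA

lemma cseq_mem (j : ℕ) : cseq A j ∈ A := Nat.nth_mem_of_infinite hA _

lemma cseq_ge (j : ℕ) : 2 * j + 2 ≤ cseq A j := (Nat.nth_strictMono hA).le_apply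

lemma cseq_two_le (j : ℕ) : cseq A j + 2 ≤ cseq A (j + 1) := by
  have h1 : Nat.nth (· ∈ A) (2 * j + 2) < Nat.nth (· ∈ A) (2 * j + 3) :=
    Nat.nth_strictMono hA (by omega)
  have h2 : Nat.nth (· ∈ A) (2 * j + 3) < Nat.nth (· ∈ A) (2 * j + 4) :=
    Nat.nth_strictMono hA (by omega)
  have : 2 * (j + 1) + 2 = 2 * j + 4 := by omega
  rw [cseq, cseq, this]
  omega

include ha

lemma a_mono_le {m m' : ℕ} (hmm : m ≤ m') : a m ≤ a m' :=
  Nat.le_of_dvd (apos ha m') (amono ha hmm)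

lemma cseq_gap (j t : ℕ) : a (cseq A j) * 4 ^ t ≤ a (cseq A (j + t)) := by
  induction t with
  | zero => simp
  | succ t ih =>
    have h1 : a (cseq A (j + t)) * 4 ≤ a (cseq A (j + t) + 2) := by
      have := pow_mul_le ha (cseq A (j + t)) 2
      norm_num at this
      omega
    have h2 : a (cseq A (j + t) + 2) ≤ a (cseq A (j + t + 1)) :=
      a_mono_le ha hA (cseq_two_le hA (j + t))
    calc a (cseq A j) * 4 ^ (t + 1) = a (cseq A j) * 4 ^ t * 4 := by ring
    _ ≤ a (cseq A (j + t)) * 4 := by omega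
    _ ≤ a (cseq A (j + (t + 1))) := by rw [show j + (t + 1) = j + t + 1 by omega]; omega

lemma a_cseq_ge (j : ℕ) : 4 ^ (j + 1) ≤ a (cseq A j) := by
  calc (4:ℕ) ^ (j + 1) = 2 ^ (2 * j + 2) := by
        rw [(show 2 * j + 2 = 2 * (j + 1) by omega), pow_mul]; norm_num
  _ ≤ 2 ^ (cseq A j) := Nat.pow_le_pow_right (by norm_num) (cseq_ge hA j)
  _ ≤ a (cseq A j) := two_pow_le ha _

lemma gfun_nonneg (S : Set ℕ) (j : ℕ) : 0 ≤ gfun a A S j := by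
  rw [gfun]; split <;> positivity

lemma gfun_le (S : Set ℕ) (j : ℕ) : gfun a A S j ≤ ((a (cseq A j) : ℝ))⁻¹ := by
  rw [gfun]; split
  · exact le_refl _
  · positivity

lemma gfun_le_geom (S : Set ℕ) (j : ℕ) : gfun a A S j ≤ (1/4 : ℝ) ^ (j + 1) := by
  refine (gfun_le ha hA S j).trans ?_
  rw [one_div, inv_pow]
  apply inv_anti₀ (by positivity)
  exact_mod_cast a_cseq_ge ha hA j

lemma gfun_summable (S : Set ℕ) : Summable (gfun a A S) := by
  apply Summable.of_nonneg_of_le (gfun_nonneg ha hA S) (fun j => (gfun_le_geom ha hA S j).trans ?_)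
    (summable_geometric_of_lt_one (r := (1/4:ℝ)) (by norm_num) (by norm_num))
  exact pow_le_pow_of_le_one (by norm_num) (by norm_num) (by omega)

lemma tail_nonneg (S : Set ℕ) (K : ℕ) : 0 ≤ ∑' j, gfun a A S (j + K) :=
  tsum_nonneg (fun j => gfun_nonneg ha hA S _)

lemma tail_le (S : Set ℕ) (K : ℕ) :
    ∑' j, gfun a A S (j + K) ≤ (4/3 : ℝ) * ((a (cseq A K) : ℝ))⁻¹ := by
  have hterm : ∀ j, gfun a A S (j + K) ≤ ((a (cseq A K) : ℝ))⁻¹ * (1/4 : ℝ) ^ j := by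
    intro j
    refine (gfun_le ha hA S (j + K)).trans ?_
    have hgap : (a (cseq A K) : ℝ) * 4 ^ j ≤ (a (cseq A (K + j)) : ℝ) := by
      exact_mod_cast cseq_gap ha hA K j
    rw [show j + K = K + j by omega]
    rw [one_div, inv_pow, ← mul_inv]
    have hpos : (0:ℝ) < (a (cseq A K) : ℝ) * 4 ^ j := by
      have : (0:ℝ) < (a (cseq A K) : ℝ) := by exact_mod_cast apos ha _
      positivity
    exact inv_anti₀ hpos hgap
  have hsum2 : Summable (fun j => ((a (cseq A K) : ℝ))⁻¹ * (1/4 : ℝ) ^ j) :=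
    (summable_geometric_of_lt_one (r := (1/4:ℝ)) (by norm_num) (by norm_num)).mul_left _
  calc ∑' j, gfun a A S (j + K) ≤ ∑' j, ((a (cseq A K) : ℝ))⁻¹ * (1/4 : ℝ) ^ j :=
    Summable.tsum_mono ((summable_nat_add_iff K).mpr (gfun_summable ha hA S)) hsum2 hterm
  _ = ((a (cseq A K) : ℝ))⁻¹ * ∑' j, (1/4 : ℝ) ^ j := tsum_mul_left
  _ = ((a (cseq A K) : ℝ))⁻¹ * (4/3) := by
      rw [tsum_geometric_of_lt_one (by norm_num) (by norm_num)]; norm_num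
  _ = (4/3 : ℝ) * ((a (cseq A K) : ℝ))⁻¹ := by ring

lemma xval_nonneg (S : Set ℕ) : 0 ≤ xval a A S :=
  tsum_nonneg (gfun_nonneg ha hA S)

lemma xval_le (S : Set ℕ) : xval a A S ≤ 1/3 := by
  have h := tail_le ha hA S 0
  simp only [add_zero] at h
  have h2 : ((a (cseq A 0) : ℝ))⁻¹ ≤ 1/4 := by
    rw [show (1/4 : ℝ) = ((4:ℝ))⁻¹ by norm_num]
    apply inv_anti₀ (by norm_num)
    have := a_cseq_ge ha hA 0
    exact_mod_cast (by omega : (4:ℕ) ≤ a (cseq A 0))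
  calc xval a A S = ∑' j, gfun a A S (j + 0) := by simp [xval]
  _ ≤ (4/3 : ℝ) * ((a (cseq A 0) : ℝ))⁻¹ := tail_le ha hA S 0
  _ ≤ (4/3) * (1/4) := by nlinarith
  _ ≤ 1/3 := by norm_num

end construction
section key

variable {a : ℕ → ℕ} (ha : IsArithSeq a) {A : Set ℕ} (hA : A.Infinite)

set_option linter.unusedSectionVars false

include ha hA

lemma smul_eq_tail (S : Set ℕ) {d K : ℕ} (hd : ∀ j < K, a (cseq A j) ∣ d) :
    ((d : ℤ) • ((xval a A S : ℝ) : AddCircle (1:ℝ)))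
      = ((∑' j, (d : ℝ) * gfun a A S (j + K) : ℝ) : AddCircle (1:ℝ)) := by
  have hsum : Summable (fun j => (d:ℝ) * gfun a A S j) := (gfun_summable ha hA S).mul_left _
  have hsplit := hsum.sum_add_tsum_nat_add K
  have hmulx : (d:ℝ) * xval a A S = ∑' j, (d:ℝ) * gfun a A S j := tsum_mul_left.symm
  have hint : (∑ i ∈ Finset.range K, (d:ℝ) * gfun a A S i)
      = (((∑ i ∈ Finset.range K, if i ∈ S then (d / a (cseq A i)) else 0 : ℕ) : ℤ) : ℝ) := by
    rw [Int.cast_natCast, Nat.cast_sum]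
    refine Finset.sum_congr rfl (fun i hi => ?_)
    by_cases hiS : i ∈ S
    · have hdvd := hd i (Finset.mem_range.mp hi)
      have hne : (a (cseq A i) : ℝ) ≠ 0 := by
        exact_mod_cast (apos ha (cseq A i)).ne'
      rw [gfun, if_pos hiS, if_pos hiS, Nat.cast_div hdvd hne, div_eq_mul_inv]
    · rw [gfun, if_neg hiS, if_neg hiS]
      simp
  set z : ℤ := ((∑ i ∈ Finset.range K, if i ∈ S then (d / a (cseq A i)) else 0 : ℕ) : ℤ) with hz
  have key : (d:ℝ) * xval a A S = (z:ℝ) + ∑' j, (d:ℝ) * gfun a A S (j + K) := by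
    rw [hmulx, ← hsplit, hint]
  have h1 : ((d : ℤ) • ((xval a A S : ℝ) : AddCircle (1:ℝ)))
      = (((d:ℝ) * xval a A S : ℝ) : AddCircle (1:ℝ)) := by
    have hzs : (d:ℤ) • xval a A S = (d:ℝ) * xval a A S := by
      rw [zsmul_eq_mul]; push_cast; ring
    calc ((d : ℤ) • ((xval a A S : ℝ) : AddCircle (1:ℝ)))
        = (((d:ℤ) • xval a A S : ℝ) : AddCircle (1:ℝ)) := rfl
    _ = (((d:ℝ) * xval a A S : ℝ) : AddCircle (1:ℝ)) := by rw [hzs]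
  rw [h1, key]
  have h2 : (((z:ℝ) + ∑' j, (d:ℝ) * gfun a A S (j + K) : ℝ) : AddCircle (1:ℝ))
      = (((z:ℝ) : ℝ) : AddCircle (1:ℝ))
        + ((∑' j, (d:ℝ) * gfun a A S (j + K) : ℝ) : AddCircle (1:ℝ)) := rfl
  rw [h2]
  have h3 : (((z:ℝ) : ℝ) : AddCircle (1:ℝ)) = 0 := by
    rw [AddCircle.coe_eq_zero_iff]
    exact ⟨z, by simp⟩
  rw [h3, zero_add]

lemma xval_mem (hAd : ∀ m : ℕ, HasDensity (liftSet a ((fun x => x - m) '' A)) 0) (S : Set ℕ) :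
    ((xval a A S : ℝ) : AddCircle (1:ℝ)) ∈ statChar (fun n => (dSeq a n : ℤ)) := by
  intro ε hε
  have hmin : 0 < min ε (1/2:ℝ) := lt_min hε (by norm_num)
  obtain ⟨M, hM⟩ := pow_unbounded_of_one_lt ((4/3) / min ε (1/2)) (one_lt_two (α := ℝ))
  have h2M : (0:ℝ) < (2:ℝ) ^ M := by positivity
  have hM' : (4/3 : ℝ) * ((2:ℝ) ^ M)⁻¹ < min ε (1/2) := by
    rw [div_lt_iff₀ hmin] at hM
    rw [mul_comm, inv_mul_eq_div, div_lt_iff₀ h2M]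
    nlinarith
  apply hasDensity_zero_subset
    (C := {0} ∪ ⋃ m ∈ Finset.range (M+1), liftSet a ((fun x => x - m) '' A))
  · intro n hn
    have hn' : ε ≤ ‖((dSeq a n : ℤ)) • ((xval a A S : ℝ) : AddCircle (1:ℝ))‖ := hn
    obtain ⟨k, s, hs, hneq, hdval⟩ := exists_scale ha n
    obtain ⟨K, hK1, hK2⟩ : ∃ K, k < cseq A K ∧ ∀ j, j < K → cseq A j ≤ k := by
      have H : ∀ N : ℕ, (∀ j ≤ N, cseq A j ≤ k) ∨
          ∃ K, K ≤ N ∧ k < cseq A K ∧ ∀ j, j < K → cseq A j ≤ k := by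
        intro N
        induction N with
        | zero =>
          rcases le_or_gt (cseq A 0) k with h | h
          · left; intro j hj; rw [Nat.le_zero.mp hj]; exact h
          · right; exact ⟨0, le_refl _, h, fun j hj => absurd hj (by omega)⟩
        | succ N ih =>
          rcases ih with hall | ⟨K, hKN, h1, h2⟩
          · rcases le_or_gt (cseq A (N + 1)) k with h | h
            · left
              intro j hj
              rcases Nat.lt_or_ge j (N + 1) with h' | h'
              · exact hall j (by omega)
              · rw [show j = N + 1 by omega]; exact h
            · right
              exact ⟨N + 1, le_refl _, h, fun j hj => hall j (by omega)⟩
          · right; exact ⟨K, by omega, h1, h2⟩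
      rcases H k with hall | ⟨K, _, h1, h2⟩
      · exfalso
        have := cseq_ge hA k
        have := hall k (le_refl k)
        omega
      · exact ⟨K, h1, h2⟩
    have hdvd : ∀ j, j < K → a (cseq A j) ∣ (s+1) * a k := fun j hj =>
      Dvd.dvd.mul_left (amono ha (hK2 j hj)) _
    have heq := smul_eq_tail ha hA S hdvd
    set tail := ∑' j, (((s+1) * a k : ℕ):ℝ) * gfun a A S (j + K) with htaildef
    have htail0 : 0 ≤ tail :=
      tsum_nonneg (fun j => mul_nonneg (by positivity) (gfun_nonneg ha hA S _))
    have hb := two_le_ratios ha k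
    have hd_le : (s+1) * a k ≤ a (k+1) := by
      have h1 : (s+1) * a k ≤ ratios a (k+1) * a k :=
        Nat.mul_le_mul_right _ (by omega)
      rw [← ratios_mul ha k] at h1
      exact h1
    by_cases hgap : k + 1 + M ≤ cseq A K
    · exfalso
      have h2 : a (k+1) * 2 ^ M ≤ a (cseq A K) := by
        have hpm := pow_mul_le ha (k+1) (cseq A K - (k+1))
        have hexp : (2:ℕ) ^ M ≤ 2 ^ (cseq A K - (k+1)) :=
          Nat.pow_le_pow_right (by norm_num) (by omega)
        have heq2 : k + 1 + (cseq A K - (k+1)) = cseq A K := by omega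
        rw [heq2] at hpm
        calc a (k+1) * 2 ^ M ≤ a (k+1) * 2 ^ (cseq A K - (k+1)) :=
          Nat.mul_le_mul_left _ hexp
        _ ≤ a (cseq A K) := hpm
      have hacK : (0:ℝ) < (a (cseq A K) : ℝ) := by exact_mod_cast apos ha _
      have h1 : tail ≤ (((s+1) * a k : ℕ):ℝ) * ((4/3) * ((a (cseq A K):ℝ))⁻¹) := by
        rw [htaildef, tsum_mul_left]
        exact mul_le_mul_of_nonneg_left (tail_le ha hA S K) (by positivity)
      have key2 : (((s+1) * a k : ℕ):ℝ) * (2:ℝ)^M ≤ (a (cseq A K) : ℝ) := by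
        have hc : ((s+1) * a k) * 2^M ≤ a (cseq A K) :=
          le_trans (Nat.mul_le_mul_right _ hd_le) h2
        exact_mod_cast hc
      have h3 : (((s+1) * a k : ℕ):ℝ) * ((a (cseq A K):ℝ))⁻¹ ≤ ((2:ℝ)^M)⁻¹ := by
        rw [← div_eq_mul_inv, div_le_iff₀ hacK, inv_mul_eq_div, le_div_iff₀ h2M]
        exact key2
      have h4 : tail < min ε (1/2) := by
        have : (((s+1) * a k : ℕ):ℝ) * ((4/3) * ((a (cseq A K):ℝ))⁻¹)
            = (4/3) * ((((s+1) * a k : ℕ):ℝ) * ((a (cseq A K):ℝ))⁻¹) := by ring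
        rw [this] at h1
        have h5 : (4/3:ℝ) * ((((s+1) * a k : ℕ):ℝ) * ((a (cseq A K):ℝ))⁻¹)
            ≤ (4/3) * ((2:ℝ)^M)⁻¹ := by nlinarith
        linarith
      have hround : round tail = 0 := by
        rw [round_eq_zero_iff]
        constructor
        · linarith
        · have := min_le_right ε (1/2:ℝ)
          linarith
      have hnorm : ‖((tail : ℝ) : AddCircle (1:ℝ))‖ = tail := by
        rw [AddCircle.norm_eq]
        simp only [inv_one, one_mul, mul_one]
        rw [hround]
        simp [abs_of_nonneg htail0]
      have hdcast : ((dSeq a n : ℤ)) = (((s+1) * a k : ℕ) : ℤ) := by exact_mod_cast hdval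
      have hn2 : ε ≤ tail := by
        have h6 : ε ≤ ‖(((s+1) * a k : ℕ) : ℤ) • ((xval a A S : ℝ) : AddCircle (1:ℝ))‖ := by
          rw [← hdcast]; exact hn'
        rw [heq] at h6
        rwa [hnorm] at h6
      have := min_le_left ε (1/2:ℝ)
      linarith
    · -- membership in the union
      push_neg at hgap
      rcases Nat.eq_zero_or_pos n with rfl | hnpos
      · exact Set.mem_union_left _ rfl
      right
      rw [Set.mem_iUnion₂]
      have hcA : cseq A K ∈ A := cseq_mem hA K
      have hnp := nseq_pos (a := a) k
      have hsucc := nseq_succ (a := a) k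
      rcases Nat.eq_zero_or_pos s with rfl | hspos
      · refine ⟨cseq A K - k, Finset.mem_range.mpr (by omega), ?_⟩
        · rw [liftSet, Set.mem_iUnion₂]
          refine ⟨k, ⟨cseq A K, hcA, by show cseq A K - (cseq A K - k) = k; omega⟩, ?_⟩
          rcases Nat.eq_zero_or_pos k with rfl | hkpos
          · exfalso
            have : n = 0 := by
              rw [hneq]
              have : nseq a 0 = 1 := rfl
              omega
            omega
          · have hmono := nseq_strictMono ha (show k - 1 < k by omega)
            simp only [Set.mem_Icc]
            omega
      · refine ⟨cseq A K - (k + 1), Finset.mem_range.mpr (by omega), ?_⟩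
        · rw [liftSet, Set.mem_iUnion₂]
          refine ⟨k + 1, ⟨cseq A K, hcA, by show cseq A K - (cseq A K - (k+1)) = k + 1; omega⟩, ?_⟩
          simp only [Nat.add_sub_cancel, Set.mem_Icc]
          have hsucc1 := nseq_succ (a := a) k
          constructor
          · omega
          · omega
  · exact hasDensity_zero_union (hasDensity_zero_singleton 0)
      (hasDensity_zero_biUnion _ _ (fun m => hAd m))

lemma xval_lt (S T : Set ℕ) {j : ℕ} (hjS : j ∈ S) (hjT : j ∉ T)
    (hagree : ∀ i, i < j → (i ∈ S ↔ i ∈ T)) : xval a A T < xval a A S := by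
  have hsS := gfun_summable ha hA S
  have hsT := gfun_summable ha hA T
  have hS := (hsS.sum_add_tsum_nat_add (j+1)).symm
  have hT := (hsT.sum_add_tsum_nat_add (j+1)).symm
  have hheads : ∀ i ∈ Finset.range j, gfun a A S i = gfun a A T i := by
    intro i hi
    rw [gfun, gfun]
    have := hagree i (Finset.mem_range.mp hi)
    by_cases hiS : i ∈ S
    · rw [if_pos hiS, if_pos (this.mp hiS)]
    · rw [if_neg hiS, if_neg (fun h => hiS (this.mpr h))]
  have hgj : gfun a A S j = ((a (cseq A j) : ℝ))⁻¹ := by rw [gfun, if_pos hjS]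
  have hgj' : gfun a A T j = 0 := by rw [gfun, if_neg hjT]
  have hsumS : ∑ i ∈ Finset.range (j+1), gfun a A S i
      = (∑ i ∈ Finset.range j, gfun a A S i) + ((a (cseq A j) : ℝ))⁻¹ := by
    rw [Finset.sum_range_succ, hgj]
  have hsumT : ∑ i ∈ Finset.range (j+1), gfun a A T i
      = (∑ i ∈ Finset.range j, gfun a A S i) + 0 := by
    rw [Finset.sum_range_succ, hgj', Finset.sum_congr rfl hheads]
  have htailT : ∑' i, gfun a A T (i + (j+1)) ≤ (4/3 : ℝ) * ((a (cseq A (j+1)) : ℝ))⁻¹ :=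
    tail_le ha hA T (j+1)
  have htailS : 0 ≤ ∑' i, gfun a A S (i + (j+1)) := tail_nonneg ha hA S (j+1)
  have hacj : (0:ℝ) < (a (cseq A j) : ℝ) := by exact_mod_cast apos ha _
  have hacj1 : (0:ℝ) < (a (cseq A (j+1)) : ℝ) := by exact_mod_cast apos ha _
  have h4 : (4:ℝ) * (a (cseq A j) : ℝ) ≤ (a (cseq A (j+1)) : ℝ) := by
    have h0 := cseq_gap ha hA j 1
    have h' : a (cseq A j) * 4 ≤ a (cseq A (j+1)) := by
      simpa [pow_one] using h0
    have h'' : (a (cseq A j) : ℝ) * 4 ≤ (a (cseq A (j+1)) : ℝ) := by exact_mod_cast h'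
    linarith
  have hinv : ((a (cseq A (j+1)) : ℝ))⁻¹ ≤ ((4:ℝ) * (a (cseq A j) : ℝ))⁻¹ :=
    inv_anti₀ (by positivity) h4
  have hinv2 : ((4:ℝ) * (a (cseq A j) : ℝ))⁻¹ = (1/4) * ((a (cseq A j) : ℝ))⁻¹ := by
    rw [mul_inv]; norm_num
  rw [xval, xval, hT, hS, hsumS, hsumT]
  have hfinal : (4/3 : ℝ) * ((a (cseq A (j+1)) : ℝ))⁻¹ < ((a (cseq A j) : ℝ))⁻¹ := by
    have hpos : (0:ℝ) < ((a (cseq A j) : ℝ))⁻¹ := by positivity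
    calc (4/3 : ℝ) * ((a (cseq A (j+1)) : ℝ))⁻¹
        ≤ (4/3) * ((1/4) * ((a (cseq A j) : ℝ))⁻¹) := by
          rw [← hinv2]; nlinarith
    _ = (1/3) * ((a (cseq A j) : ℝ))⁻¹ := by ring
    _ < ((a (cseq A j) : ℝ))⁻¹ := by nlinarith
  linarith

end key
theorem statChar_continuum_of_weaklyDli (a : ℕ → ℕ) (ha : IsArithSeq a) (h : WeaklyDli a) :
    Cardinal.mk ↥(statChar (fun n => (dSeq a n : ℤ))) = Cardinal.continuum := by
  obtain ⟨A, hA, hAd⟩ := h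
  haveI : Fact ((0:ℝ) < 1) := ⟨one_pos⟩
  have hmem : ∀ S : Set ℕ,
      ((xval a A S : ℝ) : AddCircle (1:ℝ)) ∈ statChar (fun n => (dSeq a n : ℤ)) :=
    fun S => xval_mem ha hA hAd S
  have hrange : ∀ S : Set ℕ, xval a A S ∈ Set.Ico (0:ℝ) (0 + 1) := fun S =>
    ⟨xval_nonneg ha hA S, by have := xval_le ha hA S; norm_num; linarith⟩
  have hinj : Function.Injective
      (fun S : Set ℕ => (⟨_, hmem S⟩ : ↥(statChar (fun n => (dSeq a n : ℤ))))) := by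
    intro S T hST
    have hcoe : ((xval a A S : ℝ) : AddCircle (1:ℝ)) = ((xval a A T : ℝ) : AddCircle (1:ℝ)) :=
      Subtype.ext_iff.mp hST
    have hreal : xval a A S = xval a A T :=
      (AddCircle.coe_eq_coe_iff_of_mem_Ico (hrange S) (hrange T)).mp hcoe
    by_contra hne
    have hex : ({i : ℕ | (i ∈ S ∧ i ∉ T) ∨ (i ∈ T ∧ i ∉ S)}).Nonempty := by
      by_contra hno
      rw [Set.not_nonempty_iff_eq_empty] at hno
      apply hne
      ext i
      have : i ∉ ({i : ℕ | (i ∈ S ∧ i ∉ T) ∨ (i ∈ T ∧ i ∉ S)}) := by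
        rw [hno]; exact Set.notMem_empty i
      simp only [Set.mem_setOf_eq] at this
      tauto
    obtain ⟨i, hi, hminim⟩ := wellFounded_lt.has_min _ hex
    have hagree : ∀ i', i' < i → (i' ∈ S ↔ i' ∈ T) := by
      intro i' hi'
      by_contra hiff
      have hmem' : i' ∈ {i : ℕ | (i ∈ S ∧ i ∉ T) ∨ (i ∈ T ∧ i ∉ S)} := by
        simp only [Set.mem_setOf_eq]
        tauto
      exact hminim i' hmem' hi'
    simp only [Set.mem_setOf_eq] at hi
    rcases hi with ⟨h1, h2⟩ | ⟨h1, h2⟩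
    · have := xval_lt ha hA S T h1 h2 hagree
      linarith
    · have := xval_lt ha hA T S h1 h2 (fun i' hlt => (hagree i' hlt).symm)
      linarith
  apply le_antisymm
  · calc Cardinal.mk ↥(statChar (fun n => (dSeq a n : ℤ)))
        ≤ Cardinal.mk (AddCircle (1:ℝ)) := Cardinal.mk_set_le _
    _ ≤ Cardinal.mk ℝ := Cardinal.mk_le_of_surjective
        (f := fun x : ℝ => ((x : ℝ) : AddCircle (1:ℝ))) QuotientAddGroup.mk_surjective
    _ = Cardinal.continuum := Cardinal.mk_real
  · have h1 : Cardinal.mk (Set ℕ) ≤ Cardinal.mk ↥(statChar (fun n => (dSeq a n : ℤ))) :=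
      Cardinal.mk_le_of_injective hinj
    have h2 : Cardinal.mk (Set ℕ) = Cardinal.continuum := by
      rw [Cardinal.mk_set, Cardinal.mk_nat, Cardinal.two_power_aleph0]
    rwa [h2] at h1
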